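/- Let n ≥ 1 and let H : ℝ^n → ℝ be a selector. Then for every increasing homeomorphism f : ℝ → ℝ one has H(f(x_1), …, f(x_n)) = f(H(x_1, …, x_n)) for all (x_1, …, x_n) ∈ ℝ^n. In particular, H is positively homogeneous of degree 1: H(λx_1, …, λx_n) = λ H(x_1, …, x_n) for every λ > 0. -/

import Mathlib

/-- Key lemma: a selector commutes with any continuous strictly monotone map `ℝ → ℝ`. -/
theorem selector_key (n : ℕ) (H : (Fin n → ℝ) → ℝ) (hcont : Continuous H)
    (hsel : ∀ x : Fin n → ℝ, ∃ i : Fin n, H x = x i)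
    (f : ℝ → ℝ) (hf : Continuous f) (hmono : StrictMono f)
    (x : Fin n → ℝ) : H (fun i => f (x i)) = f (H x) := by
  set c := H x with hc
  -- interpolation between identity and f
  set g : ℝ → ℝ → ℝ := fun t y => (1 - t) * y + t * f y with hg
  have hgmono : ∀ t ∈ Set.Icc (0:ℝ) 1, StrictMono (g t) := by
    intro t ht a b hab
    rcases eq_or_lt_of_le ht.1 with h0 | h0
    · simp [hg, ← h0, hab]
    · have h1 : (1 - t) * a ≤ (1 - t) * b :=
        mul_le_mul_of_nonneg_left hab.le (by linarith [ht.2])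
      have h2 : t * f a < t * f b := by
        have := hmono hab
        nlinarith
      simp only [hg]
      linarith
  have hφ : Continuous fun t => H (fun i => g t (x i)) := by
    apply hcont.comp
    apply continuous_pi
    intro i
    simp only [hg]
    fun_prop
  set A : Set ℝ := {t | H (fun i => g t (x i)) = g t c} with hA
  set B : Set ℝ := ⋃ i : Fin n, {t | x i ≠ c ∧ H (fun j => g t (x j)) = g t (x i)} with hB
  have hAclosed : IsClosed A := isClosed_eq hφ (by simp only [hg]; fun_prop)
  have hBclosed : IsClosed B := by
    apply isClosed_iUnion_of_finite
    intro i
    by_cases h : x i = c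
    · convert isClosed_empty using 1
      ext t; simp [h]
    · have : {t : ℝ | x i ≠ c ∧ H (fun j => g t (x j)) = g t (x i)}
          = {t : ℝ | H (fun j => g t (x j)) = g t (x i)} := by
        ext t; simp [h]
      rw [this]
      exact isClosed_eq hφ (by simp only [hg]; fun_prop)
  have hcover : Set.Icc (0:ℝ) 1 ⊆ A ∪ B := by
    intro t _
    obtain ⟨i, hi⟩ := hsel (fun j => g t (x j))
    by_cases h : x i = c
    · left; simp only [hA, Set.mem_setOf_eq]; rw [hi, h]
    · right; exact Set.mem_iUnion.mpr ⟨i, h, hi⟩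
  have hdisj : ∀ t ∈ Set.Icc (0:ℝ) 1, t ∈ A → t ∈ B → False := by
    intro t ht htA htB
    obtain ⟨i, hic, hi⟩ := Set.mem_iUnion.mp htB
    have : g t (x i) = g t c := by rw [← hi]; exact htA
    exact hic ((hgmono t ht).injective this)
  have h0A : (0:ℝ) ∈ A := by
    simp only [hA, Set.mem_setOf_eq, hg]
    norm_num
    exact hc.symm
  have h1A : (1:ℝ) ∈ A := by
    by_contra h1
    have h1B : (1:ℝ) ∈ B := by
      rcases hcover (Set.mem_Icc.mpr ⟨zero_le_one, le_refl 1⟩) with h | h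
      · exact absurd h h1
      · exact h
    obtain ⟨t, ht⟩ := (isPreconnected_closed_iff.mp isPreconnected_Icc) A B hAclosed hBclosed
      hcover ⟨0, Set.mem_Icc.mpr ⟨le_refl 0, zero_le_one⟩, h0A⟩
      ⟨1, Set.mem_Icc.mpr ⟨zero_le_one, le_refl 1⟩, h1B⟩
    exact hdisj t ht.1 ht.2.1 ht.2.2
  have := h1A
  simp only [hA, Set.mem_setOf_eq, hg] at this
  simpa using this

theorem selector_commutes_with_increasing_homeomorphisms
    (n : ℕ) (hn : 1 ≤ n) (H : (Fin n → ℝ) → ℝ) (hcont : Continuous H)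
    (hsel : ∀ x : Fin n → ℝ, ∃ i : Fin n, H x = x i) :
    (∀ (f : ℝ ≃ₜ ℝ), StrictMono f → ∀ x : Fin n → ℝ,
        H (fun i => f (x i)) = f (H x)) ∧
    (∀ l : ℝ, 0 < l → ∀ x : Fin n → ℝ, H (fun i => l * x i) = l * H x) := by
  constructor
  · intro f hmono x
    exact selector_key n H hcont hsel f f.continuous hmono x
  · intro l hl x
    exact selector_key n H hcont hsel (fun y => l * y) (by fun_prop)
      (fun a b hab => by simpa using mul_lt_mul_of_pos_left hab hl) x
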